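/- arXiv:1110.4938 — 2 statements merged into one kernel-verified Lean document; each statement's English description precedes it below -/
import Mathlib

section
/- For any linear contraction A : 𝒟 → 𝒟_*, the defect operators of the perturbed operator U_A satisfy I − U_A*U_A = (I_𝒟 − A*A)∘P and I − U_A U_A* = (I_{𝒟_*} − A A*)∘P_* (where the finite-rank operators on the right are composed with the inclusions of 𝒟 and 𝒟_* into H); consequently (I − U_A*U_A)^{1/2} = (I_𝒟 − A*A)^{1/2}∘P and (I − U_A U_A*)^{1/2} = (I_{𝒟_*} − A A*)^{1/2}∘P_*. -/
open MeasureTheory Filter ContinuousLinearMap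
open scoped ENNReal Topology

noncomputable section

/-- A contraction is *completely non-unitary* if there is no nonzero closed subspace,
invariant under both the operator and its adjoint, on which it restricts to a unitary. -/
def IsCnu {H : Type*} [NormedAddCommGroup H] [InnerProductSpace ℂ H] [CompleteSpace H]
    (U : H →L[ℂ] H) : Prop :=
  ∀ K : Submodule ℂ H, IsClosed (K : Set H) →
    (∀ x ∈ K, U x ∈ K) → (∀ x ∈ K, ContinuousLinearMap.adjoint U x ∈ K) →
    (∀ x ∈ K, ‖U x‖ = ‖x‖) → (∀ y ∈ K, ∃ x ∈ K, U x = y) → K = ⊥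

/-- Normalized Lebesgue (arclength) measure on the unit circle `𝕋`, as a measure on `ℂ`. -/
def mCircle : Measure ℂ :=
  (ENNReal.ofReal (2 * Real.pi))⁻¹ •
    (volume.restrict (Set.Ioc (0:ℝ) (2 * Real.pi))).map (circleMap 0 1)

/-- The characteristic function `Θ(z) = -U₀ + z D₊ (I - z U₀*)⁻¹ D` of a contraction `U₀`
with defect operators `D`, `Dstar`, as an operator on all of `H` (to be restricted to the
defect space `𝒟`). -/
def charFun {H : Type*} [NormedAddCommGroup H] [InnerProductSpace ℂ H] [CompleteSpace H]
    (U₀ D Dstar : H →L[ℂ] H) (z : ℂ) : H →L[ℂ] H :=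
  -U₀ + z • (Dstar ∘L Ring.inverse (1 - z • ContinuousLinearMap.adjoint U₀) ∘L D)

/-- `T^{(k)}`: nonnegative powers of `T`; powers of the adjoint for negative `k`. -/
def zpowOp {H : Type*} [NormedAddCommGroup H] [InnerProductSpace ℂ H] [CompleteSpace H]
    (T : H →L[ℂ] H) (k : ℤ) : H →L[ℂ] H :=
  if 0 ≤ k then T ^ k.toNat else (ContinuousLinearMap.adjoint T) ^ (-k).toNat

/-- At `ξ ∈ 𝕋`, the radial limit of `Θ` restricted to `𝒟` exists in operator norm and is a
unitary operator from `𝒟` onto `𝒟₊`. -/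
def HasUnitaryRadialLimitAt {H : Type*} [NormedAddCommGroup H] [InnerProductSpace ℂ H]
    [CompleteSpace H] (Dsp DspStar : Submodule ℂ H) (Θ : ℂ → (H →L[ℂ] H)) (ξ : ℂ) : Prop :=
  ∃ L : ↥Dsp →L[ℂ] H,
    Tendsto (fun r : ℝ => (Θ ((r : ℂ) * ξ)).comp Dsp.subtypeL) (𝓝[<] (1:ℝ)) (𝓝 L) ∧
      (∀ x : ↥Dsp, ‖L x‖ = ‖x‖) ∧ LinearMap.range (L : ↥Dsp →ₗ[ℂ] H) = DspStar


section AuxStatement13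

variable {H : Type*} [NormedAddCommGroup H] [InnerProductSpace ℂ H] [CompleteSpace H]

local notation "⟪" x ", " y "⟫" => @inner ℂ _ _ x y

/-- Uniqueness of the positive square root. -/
lemma posSqrtUnique (T₁ T₂ : H →L[ℂ] H) (h1 : T₁.IsPositive) (h2 : T₂.IsPositive)
    (h : T₁ ∘L T₁ = T₂ ∘L T₂) : T₁ = T₂ := by
  have h1' : (0 : H →L[ℂ] H) ≤ T₁ := (nonneg_iff_isPositive T₁).mpr h1
  have h2' : (0 : H →L[ℂ] H) ≤ T₂ := (nonneg_iff_isPositive T₂).mpr h2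
  have := CFC.sqrt_unique (a := T₁ * T₁) (b := T₁) rfl h1'
  rw [show T₁ * T₁ = T₂ * T₂ from h, CFC.sqrt_unique rfl h2'] at this
  exact this.symm

/-- If `D` is self-adjoint and `D (D w) = 0` then `D w = 0`. -/
lemma auxKer (D : H →L[ℂ] H) (hsa : IsSelfAdjoint D) {w : H} (h : D (D w) = 0) :
    D w = 0 := by
  have key : ⟪D w, D w⟫ = 0 := by
    calc ⟪D w, D w⟫ = ⟪ContinuousLinearMap.adjoint D w, D w⟫ := by rw [hsa.adjoint_eq]
    _ = ⟪w, D (D w)⟫ := ContinuousLinearMap.adjoint_inner_left _ _ _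
    _ = 0 := by rw [h, inner_zero_right]
  exact inner_self_eq_zero.mp key

/-- If `D` is self-adjoint and `D w = 0` then `w` is orthogonal to the closure of the range. -/
lemma auxMemOrth (D : H →L[ℂ] H) (hsa : IsSelfAdjoint D) {w : H} (h : D w = 0) :
    w ∈ ((LinearMap.range (D : H →ₗ[ℂ] H)).topologicalClosure)ᗮ := by
  rw [← Submodule.orthogonal_orthogonal_eq_closure, Submodule.triorthogonal_eq_orthogonal]
  rw [Submodule.mem_orthogonal]
  rintro u ⟨z, rfl⟩
  calc ⟪D z, w⟫ = ⟪ContinuousLinearMap.adjoint D z, w⟫ := by rw [hsa.adjoint_eq]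
  _ = ⟪z, D w⟫ := ContinuousLinearMap.adjoint_inner_left _ _ _
  _ = 0 := by rw [h, inner_zero_right]

/-- Conversely, if `w` is orthogonal to the closure of the range, then `D w = 0`. -/
lemma auxOrthKer (D : H →L[ℂ] H) (hsa : IsSelfAdjoint D) {w : H}
    (hw : w ∈ ((LinearMap.range (D : H →ₗ[ℂ] H)).topologicalClosure)ᗮ) : D w = 0 := by
  have key : ⟪D w, D w⟫ = 0 := by
    calc ⟪D w, D w⟫ = ⟪ContinuousLinearMap.adjoint D (D w), w⟫ := by
          rw [ContinuousLinearMap.adjoint_inner_left]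
    _ = ⟪D (D w), w⟫ := by rw [hsa.adjoint_eq]
    _ = 0 := by
        rw [Submodule.mem_orthogonal] at hw
        exact hw _ (Submodule.le_topologicalClosure _ ⟨D w, rfl⟩)
  exact inner_self_eq_zero.mp key

end AuxStatement13

set_option maxHeartbeats 1600000

theorem statement13
    {H : Type*} [NormedAddCommGroup H] [InnerProductSpace ℂ H] [CompleteSpace H]
    [TopologicalSpace.SeparableSpace H]
    (U₀ : H →L[ℂ] H) (hU₀ : ‖U₀‖ ≤ 1) (hcnu : IsCnu U₀)
    (D Dstar : H →L[ℂ] H)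
    (hDpos : D.IsPositive) (hD : D ∘L D = 1 - ContinuousLinearMap.adjoint U₀ ∘L U₀)
    (hDspos : Dstar.IsPositive)
    (hDs : Dstar ∘L Dstar = 1 - U₀ ∘L ContinuousLinearMap.adjoint U₀)
    (Dsp DspStar : Submodule ℂ H)
    (hDsp : Dsp = (LinearMap.range (D : H →ₗ[ℂ] H)).topologicalClosure)
    (hDspStar : DspStar = (LinearMap.range (Dstar : H →ₗ[ℂ] H)).topologicalClosure)
    [FiniteDimensional ℂ ↥Dsp] [FiniteDimensional ℂ ↥DspStar]
    (n : ℕ) (hn : Module.finrank ℂ ↥Dsp = n) (hns : Module.finrank ℂ ↥DspStar = n)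
    (A : ↥Dsp →L[ℂ] ↥DspStar) (hA : ‖A‖ ≤ 1)
    (UA : H →L[ℂ] H)
    (hUA : UA =
      ((1 : H →L[ℂ] H) - DspStar.subtypeL ∘L (DspStar.orthogonalProjectionOnto : H →L[ℂ] ↥DspStar))
          ∘L U₀ ∘L
          ((1 : H →L[ℂ] H) - Dsp.subtypeL ∘L (Dsp.orthogonalProjectionOnto : H →L[ℂ] ↥Dsp))
        + DspStar.subtypeL ∘L A ∘L (Dsp.orthogonalProjectionOnto : H →L[ℂ] ↥Dsp))
    -- `S` and `Sstar` are the positive square roots of `I_𝒟 - A*A` and `I_𝒟* - A A*`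
    (S : ↥Dsp →L[ℂ] ↥Dsp) (hSpos : S.IsPositive)
    (hS : S ∘L S = 1 - ContinuousLinearMap.adjoint A ∘L A)
    (Sstar : ↥DspStar →L[ℂ] ↥DspStar) (hSstarpos : Sstar.IsPositive)
    (hSstar : Sstar ∘L Sstar = 1 - A ∘L ContinuousLinearMap.adjoint A)
    -- `DA` and `DAstar` are the positive square roots of `I - U_A* U_A` and `I - U_A U_A*`
    (DA : H →L[ℂ] H) (hDApos : DA.IsPositive)
    (hDA : DA ∘L DA = 1 - ContinuousLinearMap.adjoint UA ∘L UA)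
    (DAstar : H →L[ℂ] H) (hDAstarpos : DAstar.IsPositive)
    (hDAstar : DAstar ∘L DAstar = 1 - UA ∘L ContinuousLinearMap.adjoint UA) :
    ((1 : H →L[ℂ] H) - ContinuousLinearMap.adjoint UA ∘L UA =
        Dsp.subtypeL ∘L ((1 : ↥Dsp →L[ℂ] ↥Dsp) - ContinuousLinearMap.adjoint A ∘L A) ∘L
          (Dsp.orthogonalProjectionOnto : H →L[ℂ] ↥Dsp)) ∧
    ((1 : H →L[ℂ] H) - UA ∘L ContinuousLinearMap.adjoint UA =
        DspStar.subtypeL ∘L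
          ((1 : ↥DspStar →L[ℂ] ↥DspStar) - A ∘L ContinuousLinearMap.adjoint A) ∘L
          (DspStar.orthogonalProjectionOnto : H →L[ℂ] ↥DspStar)) ∧
    DA = Dsp.subtypeL ∘L S ∘L (Dsp.orthogonalProjectionOnto : H →L[ℂ] ↥Dsp) ∧
    DAstar = DspStar.subtypeL ∘L Sstar ∘L
      (DspStar.orthogonalProjectionOnto : H →L[ℂ] ↥DspStar) := by
  have hDsa : IsSelfAdjoint D := hDpos.isSelfAdjoint
  have hDssa : IsSelfAdjoint Dstar := hDspos.isSelfAdjoint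
  set π : H →L[ℂ] ↥Dsp := (Dsp.orthogonalProjectionOnto : H →L[ℂ] ↥Dsp) with hπ
  set πs : H →L[ℂ] ↥DspStar := (DspStar.orthogonalProjectionOnto : H →L[ℂ] ↥DspStar) with hπs
  set ι : ↥Dsp →L[ℂ] H := Dsp.subtypeL with hι
  set ιs : ↥DspStar →L[ℂ] H := DspStar.subtypeL with hιs
  have hπι : ∀ v : ↥Dsp, π (ι v) = v := fun v => Submodule.orthogonalProjectionOnto_mem_subspace_eq_self v
  have hπsιs : ∀ v : ↥DspStar, πs (ιs v) = v := fun v =>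
    Submodule.orthogonalProjectionOnto_mem_subspace_eq_self v
  have hQmem : ∀ x : H, x - ι (π x) ∈ Dspᗮ := fun x =>
    Submodule.sub_starProjection_mem_orthogonal (K := Dsp) x
  have hQsmem : ∀ x : H, x - ιs (πs x) ∈ DspStarᗮ := fun x =>
    Submodule.sub_starProjection_mem_orthogonal (K := DspStar) x
  have hDQ : ∀ x : H, D (x - ι (π x)) = 0 := fun x =>
    auxOrthKer D hDsa (hDsp ▸ hQmem x)
  have hDsQs : ∀ x : H, Dstar (x - ιs (πs x)) = 0 := fun x =>
    auxOrthKer Dstar hDssa (hDspStar ▸ hQsmem x)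
  have hπQ : ∀ x : H, π (x - ι (π x)) = 0 := fun x =>
    Submodule.orthogonalProjectionOnto_apply_of_mem_orthogonal (hQmem x)
  have hπsQs : ∀ x : H, πs (x - ιs (πs x)) = 0 := fun x =>
    Submodule.orthogonalProjectionOnto_apply_of_mem_orthogonal (hQsmem x)
  -- pointwise versions of the defect identities for U₀
  have hUU : ∀ y : H, ContinuousLinearMap.adjoint U₀ (U₀ y) = y - D (D y) := by
    intro y
    have h := congrArg (fun T : H →L[ℂ] H => T y) hD
    simp only [ContinuousLinearMap.comp_apply, ContinuousLinearMap.sub_apply,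
      ContinuousLinearMap.one_apply] at h
    rw [h]; abel
  have hUUs : ∀ y : H, U₀ (ContinuousLinearMap.adjoint U₀ y) = y - Dstar (Dstar y) := by
    intro y
    have h := congrArg (fun T : H →L[ℂ] H => T y) hDs
    simp only [ContinuousLinearMap.comp_apply, ContinuousLinearMap.sub_apply,
      ContinuousLinearMap.one_apply] at h
    rw [h]; abel
  have hUUQ : ∀ x : H,
      ContinuousLinearMap.adjoint U₀ (U₀ (x - ι (π x))) = x - ι (π x) := by
    intro x; rw [hUU, hDQ x, map_zero, sub_zero]
  have hUUsQs : ∀ x : H,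
      U₀ (ContinuousLinearMap.adjoint U₀ (x - ιs (πs x))) = x - ιs (πs x) := by
    intro x; rw [hUUs, hDsQs x, map_zero, sub_zero]
  -- U₀ maps Dspᗮ into DspStarᗮ, and conversely for the adjoint
  have hU₀Q : ∀ x : H, Dstar (U₀ (x - ι (π x))) = 0 := by
    intro x
    apply auxKer Dstar hDssa
    have h := congrArg (fun T : H →L[ℂ] H => T (U₀ (x - ι (π x)))) hDs
    simp only [ContinuousLinearMap.comp_apply, ContinuousLinearMap.sub_apply,
      ContinuousLinearMap.one_apply] at h
    rw [h, hUUQ x, sub_self]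
  have hU₀sQs : ∀ x : H, D (ContinuousLinearMap.adjoint U₀ (x - ιs (πs x))) = 0 := by
    intro x
    apply auxKer D hDsa
    have h := congrArg
      (fun T : H →L[ℂ] H => T (ContinuousLinearMap.adjoint U₀ (x - ιs (πs x)))) hD
    simp only [ContinuousLinearMap.comp_apply, ContinuousLinearMap.sub_apply,
      ContinuousLinearMap.one_apply] at h
    rw [h, hUUsQs x, sub_self]
  have hπsU₀Q : ∀ x : H, πs (U₀ (x - ι (π x))) = 0 := by
    intro x
    apply Submodule.orthogonalProjectionOnto_apply_of_mem_orthogonal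
    rw [hDspStar]
    exact auxMemOrth Dstar hDssa (hU₀Q x)
  have hπU₀sQs : ∀ x : H, π (ContinuousLinearMap.adjoint U₀ (x - ιs (πs x))) = 0 := by
    intro x
    apply Submodule.orthogonalProjectionOnto_apply_of_mem_orthogonal
    rw [hDsp]
    exact auxMemOrth D hDsa (hU₀sQs x)
  -- adjoints of the projections
  have hadjι : ContinuousLinearMap.adjoint ι = π := by
    rw [hι, hπ]; exact Dsp.adjoint_subtypeL
  have hadjιs : ContinuousLinearMap.adjoint ιs = πs := by
    rw [hιs, hπs]; exact DspStar.adjoint_subtypeL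
  have hadjπ : ContinuousLinearMap.adjoint π = ι := by
    rw [hι, hπ]; exact Dsp.adjoint_orthogonalProjectionOnto
  have hadjπs : ContinuousLinearMap.adjoint πs = ιs := by
    rw [hιs, hπs]; exact DspStar.adjoint_orthogonalProjectionOnto
  -- pointwise formula for UA and its adjoint
  have hUAx : ∀ x : H, UA x = U₀ (x - ι (π x)) + ιs (A (π x)) := by
    intro x
    rw [hUA]
    simp only [ContinuousLinearMap.add_apply, ContinuousLinearMap.comp_apply,
      ContinuousLinearMap.sub_apply, ContinuousLinearMap.one_apply]
    rw [hπsU₀Q x, map_zero, sub_zero]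
  have hUAadj : ContinuousLinearMap.adjoint UA =
      ((1 : H →L[ℂ] H) - ι ∘L π) ∘L ContinuousLinearMap.adjoint U₀ ∘L
        ((1 : H →L[ℂ] H) - ιs ∘L πs) + ι ∘L ContinuousLinearMap.adjoint A ∘L πs := by
    rw [hUA, map_add]
    congr 1
    · rw [ContinuousLinearMap.adjoint_comp, ContinuousLinearMap.adjoint_comp, map_sub, map_sub,
        ContinuousLinearMap.adjoint_comp, ContinuousLinearMap.adjoint_comp, hadjι, hadjιs,
        hadjπ, hadjπs]
      have h1 : ContinuousLinearMap.adjoint (1 : H →L[ℂ] H) = 1 :=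
        ContinuousLinearMap.adjoint_id
      rw [h1, ContinuousLinearMap.comp_assoc]
    · rw [ContinuousLinearMap.adjoint_comp, ContinuousLinearMap.adjoint_comp, hadjιs, hadjπ,
        ContinuousLinearMap.comp_assoc]
  have hUAadjx : ∀ w : H, ContinuousLinearMap.adjoint UA w =
      (ContinuousLinearMap.adjoint U₀ (w - ιs (πs w))
        - ι (π (ContinuousLinearMap.adjoint U₀ (w - ιs (πs w)))))
      + ι (ContinuousLinearMap.adjoint A (πs w)) := by
    intro w
    rw [hUAadj]
    simp only [ContinuousLinearMap.add_apply, ContinuousLinearMap.comp_apply,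
      ContinuousLinearMap.sub_apply, ContinuousLinearMap.one_apply]
  -- first defect identity
  have key1 : (1 : H →L[ℂ] H) - ContinuousLinearMap.adjoint UA ∘L UA =
      ι ∘L ((1 : ↥Dsp →L[ℂ] ↥Dsp) - ContinuousLinearMap.adjoint A ∘L A) ∘L π := by
    ext x
    have h1 : πs (UA x) = A (π x) := by
      rw [hUAx x, map_add, hπsU₀Q x, hπsιs, zero_add]
    have h2 : UA x - ιs (πs (UA x)) = U₀ (x - ι (π x)) := by
      rw [h1, hUAx x]; abel
    have h3 : ContinuousLinearMap.adjoint UA (UA x) =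
        (x - ι (π x)) + ι (ContinuousLinearMap.adjoint A (A (π x))) := by
      rw [hUAadjx (UA x), h2, h1, hUUQ x, hπQ x, map_zero, sub_zero]
    simp only [ContinuousLinearMap.sub_apply, ContinuousLinearMap.comp_apply,
      ContinuousLinearMap.one_apply]
    rw [h3, map_sub]
    abel
  -- second defect identity
  have key2 : (1 : H →L[ℂ] H) - UA ∘L ContinuousLinearMap.adjoint UA =
      ιs ∘L ((1 : ↥DspStar →L[ℂ] ↥DspStar) - A ∘L ContinuousLinearMap.adjoint A) ∘L πs := by
    ext x
    have h1 : π (ContinuousLinearMap.adjoint UA x) = ContinuousLinearMap.adjoint A (πs x) := by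
      rw [hUAadjx x, map_add, map_sub, hπι, sub_self, zero_add, hπι]
    have h2 : ContinuousLinearMap.adjoint UA x - ι (π (ContinuousLinearMap.adjoint UA x)) =
        ContinuousLinearMap.adjoint U₀ (x - ιs (πs x))
          - ι (π (ContinuousLinearMap.adjoint U₀ (x - ιs (πs x)))) := by
      rw [h1, hUAadjx x]; abel
    have h3 : UA (ContinuousLinearMap.adjoint UA x) =
        (x - ιs (πs x)) + ιs (A (ContinuousLinearMap.adjoint A (πs x))) := by
      rw [hUAx (ContinuousLinearMap.adjoint UA x), h2, h1, hπU₀sQs x, map_zero, sub_zero,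
        hUUsQs x]
    simp only [ContinuousLinearMap.sub_apply, ContinuousLinearMap.comp_apply,
      ContinuousLinearMap.one_apply]
    rw [h3, map_sub]
    abel
  -- square-root identities
  have hπιcomp : π ∘L ι = 1 := ContinuousLinearMap.ext fun v => by
    simpa using congrArg Subtype.val (hπι v)
  have hπsιscomp : πs ∘L ιs = 1 := ContinuousLinearMap.ext fun v => by
    simpa using congrArg Subtype.val (hπsιs v)
  have hTpos : (ι ∘L S ∘L π).IsPositive := by
    constructor
    · rw [← ContinuousLinearMap.isSelfAdjoint_iff_isSymmetric, ContinuousLinearMap.isSelfAdjoint_iff']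
      rw [ContinuousLinearMap.adjoint_comp, ContinuousLinearMap.adjoint_comp, hadjι, hadjπ,
        hSpos.isSelfAdjoint.adjoint_eq, ContinuousLinearMap.comp_assoc]
    · intro x
      have : (ι ∘L S ∘L π).reApplyInnerSelf x = S.reApplyInnerSelf (π x) := by
        rw [ContinuousLinearMap.reApplyInnerSelf_apply, ContinuousLinearMap.reApplyInnerSelf_apply,
          ContinuousLinearMap.comp_apply, ContinuousLinearMap.comp_apply, ← hadjπ,
          ContinuousLinearMap.adjoint_inner_left]
      rw [this]
      exact hSpos.2 (π x)
  have hTspos : (ιs ∘L Sstar ∘L πs).IsPositive := by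
    constructor
    · rw [← ContinuousLinearMap.isSelfAdjoint_iff_isSymmetric, ContinuousLinearMap.isSelfAdjoint_iff']
      rw [ContinuousLinearMap.adjoint_comp, ContinuousLinearMap.adjoint_comp, hadjιs, hadjπs,
        hSstarpos.isSelfAdjoint.adjoint_eq, ContinuousLinearMap.comp_assoc]
    · intro x
      have : (ιs ∘L Sstar ∘L πs).reApplyInnerSelf x = Sstar.reApplyInnerSelf (πs x) := by
        rw [ContinuousLinearMap.reApplyInnerSelf_apply, ContinuousLinearMap.reApplyInnerSelf_apply,
          ContinuousLinearMap.comp_apply, ContinuousLinearMap.comp_apply, ← hadjπs,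
          ContinuousLinearMap.adjoint_inner_left]
      rw [this]
      exact hSstarpos.2 (πs x)
  have hTsq : (ι ∘L S ∘L π) ∘L (ι ∘L S ∘L π) = ι ∘L ((1 : ↥Dsp →L[ℂ] ↥Dsp)
      - ContinuousLinearMap.adjoint A ∘L A) ∘L π := by
    calc (ι ∘L S ∘L π) ∘L (ι ∘L S ∘L π) = ι ∘L (S ∘L ((π ∘L ι) ∘L (S ∘L π))) := by
          simp only [ContinuousLinearMap.comp_assoc]
    _ = ι ∘L (S ∘L S) ∘L π := by
          rw [hπιcomp, show ((1 : ↥Dsp →L[ℂ] ↥Dsp) ∘L (S ∘L π)) = S ∘L π from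
            ContinuousLinearMap.id_comp _]
          simp only [ContinuousLinearMap.comp_assoc]
    _ = _ := by rw [hS]
  have hTssq : (ιs ∘L Sstar ∘L πs) ∘L (ιs ∘L Sstar ∘L πs) =
      ιs ∘L ((1 : ↥DspStar →L[ℂ] ↥DspStar) - A ∘L ContinuousLinearMap.adjoint A) ∘L πs := by
    calc (ιs ∘L Sstar ∘L πs) ∘L (ιs ∘L Sstar ∘L πs)
        = ιs ∘L (Sstar ∘L ((πs ∘L ιs) ∘L (Sstar ∘L πs))) := by
          simp only [ContinuousLinearMap.comp_assoc]
    _ = ιs ∘L (Sstar ∘L Sstar) ∘L πs := by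
          rw [hπsιscomp, show ((1 : ↥DspStar →L[ℂ] ↥DspStar) ∘L (Sstar ∘L πs)) = Sstar ∘L πs from
            ContinuousLinearMap.id_comp _]
          simp only [ContinuousLinearMap.comp_assoc]
    _ = _ := by rw [hSstar]
  refine ⟨key1, key2, ?_, ?_⟩
  · exact posSqrtUnique DA (ι ∘L S ∘L π) hDApos hTpos (by rw [hDA, key1, hTsq])
  · exact posSqrtUnique DAstar (ιs ∘L Sstar ∘L πs) hDAstarpos hTspos
      (by rw [hDAstar, key2, hTssq])


end
end

section
/- If A : 𝒟 → 𝒟_* is a strict contraction, i.e. ‖A f‖ < ‖f‖ for every nonzero f ∈ 𝒟, then the perturbed operator U_A is a completely non-unitary contraction with the same defect spaces as U₀: the closure of the range of (I − U_A*U_A)^{1/2} equals 𝒟 and the closure of the range of (I − U_A U_A*)^{1/2} equals 𝒟_*. -/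
open MeasureTheory Filter ContinuousLinearMap
open scoped ENNReal Topology

noncomputable section

set_option linter.unusedSectionVars false
set_option maxHeartbeats 1000000

section AuxCnu

variable {H : Type*} [NormedAddCommGroup H] [InnerProductSpace ℂ H] [CompleteSpace H]

local notation "⟪" x ", " y "⟫" => @inner ℂ _ _ x y

lemma sa_swap' {T : H →L[ℂ] H} (hsa : IsSelfAdjoint T) (y z : H) :
    ⟪T y, z⟫ = ⟪y, T z⟫ := by
  conv_lhs => rw [← isSelfAdjoint_iff'.mp hsa]
  exact adjoint_inner_left T z y

lemma defect_norm_sq' (U Dop : H →L[ℂ] H) (hsa : IsSelfAdjoint Dop)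
    (h : Dop ∘L Dop = 1 - ContinuousLinearMap.adjoint U ∘L U) (x : H) :
    ‖Dop x‖ ^ 2 = ‖x‖ ^ 2 - ‖U x‖ ^ 2 := by
  have hDx : ⟪Dop x, Dop x⟫ = ⟪x, x⟫ - ⟪U x, U x⟫ := by
    have e1 : ⟪Dop x, Dop x⟫ = ⟪(Dop ∘L Dop) x, x⟫ := (sa_swap' hsa (Dop x) x).symm
    rw [e1, h]
    simp only [sub_apply, one_apply, comp_apply, inner_sub_left]
    rw [adjoint_inner_left]
    rfl
  have := congrArg (RCLike.re (K := ℂ)) hDx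
  simpa [inner_self_eq_norm_sq, map_sub, ← Complex.ofReal_pow] using this

lemma defect_eq_zero_iff' (U Dop : H →L[ℂ] H) (hsa : IsSelfAdjoint Dop)
    (h : Dop ∘L Dop = 1 - ContinuousLinearMap.adjoint U ∘L U) (x : H) :
    Dop x = 0 ↔ ‖U x‖ = ‖x‖ := by
  have key := defect_norm_sq' U Dop hsa h x
  constructor
  · intro hx
    rw [hx] at key
    simp only [norm_zero] at key
    have h2 : ‖U x‖ ^ 2 = ‖x‖ ^ 2 := by nlinarith
    have := congrArg Real.sqrt h2
    rwa [Real.sqrt_sq (norm_nonneg _), Real.sqrt_sq (norm_nonneg _)] at this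
  · intro hx
    rw [hx, sub_self] at key
    have : ‖Dop x‖ = 0 := by nlinarith [norm_nonneg (Dop x)]
    exact norm_eq_zero.mp this

lemma orthogonal_range_selfadjoint' (T : H →L[ℂ] H) (hsa : IsSelfAdjoint T) :
    (LinearMap.range (T : H →ₗ[ℂ] H))ᗮ = LinearMap.ker (T : H →ₗ[ℂ] H) := by
  ext x
  simp only [Submodule.mem_orthogonal, LinearMap.mem_range, LinearMap.mem_ker, coe_coe]
  constructor
  · intro hx
    have h2 := hx (T (T x)) ⟨T x, rfl⟩
    rw [sa_swap' hsa] at h2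
    exact inner_self_eq_zero.mp h2
  · intro hx u hu
    obtain ⟨y, rfl⟩ := hu
    rw [sa_swap' hsa, hx, inner_zero_right]

lemma closure_range_selfadjoint' (T : H →L[ℂ] H) (hsa : IsSelfAdjoint T) :
    (LinearMap.range (T : H →ₗ[ℂ] H)).topologicalClosure = (LinearMap.ker (T : H →ₗ[ℂ] H))ᗮ := by
  rw [← Submodule.orthogonal_orthogonal_eq_closure, orthogonal_range_selfadjoint' T hsa]

lemma selfadjoint_sq_apply_eq_zero' {T : H →L[ℂ] H} (hsa : IsSelfAdjoint T) {y : H}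
    (h2 : T (T y) = 0) : T y = 0 := by
  have : ⟪T y, T y⟫ = 0 := by rw [sa_swap' hsa, h2, inner_zero_right]
  exact inner_self_eq_zero.mp this

lemma V_apply' (U : H →L[ℂ] H) (S T : Submodule ℂ H) [CompleteSpace S] [CompleteSpace T]
    (B : ↥S →L[ℂ] ↥T) (hmap : ∀ x : H, x ∈ Sᗮ → U x ∈ Tᗮ) (x : H) :
    (((1 : H →L[ℂ] H) - T.subtypeL ∘L (Submodule.orthogonalProjectionOnto T : H →L[ℂ] ↥T)) ∘L U ∘L
      ((1 : H →L[ℂ] H) - S.subtypeL ∘L (Submodule.orthogonalProjectionOnto S : H →L[ℂ] ↥S)) +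
      T.subtypeL ∘L B ∘L (Submodule.orthogonalProjectionOnto S : H →L[ℂ] ↥S)) x
      = U (x - (Submodule.orthogonalProjectionOnto S x : H)) + ((B (Submodule.orthogonalProjectionOnto S x)) : H) := by
  have h1 : x - (Submodule.orthogonalProjectionOnto S x : H) ∈ Sᗮ := Submodule.sub_starProjection_mem_orthogonal (K := S) x
  have h2 := hmap _ h1
  simp only [add_apply, comp_apply, sub_apply, one_apply, Submodule.subtypeL_apply]
  simp only [ContinuousLinearMap.one_apply]
  rw [Submodule.orthogonalProjectionOnto_apply_of_mem_orthogonal h2]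
  simp

lemma orth_norm_sq' {a b : H} (hab : ⟪a, b⟫ = 0) : ‖a + b‖ ^ 2 = ‖a‖ ^ 2 + ‖b‖ ^ 2 := by
  rw [norm_add_sq (𝕜 := ℂ), hab]
  simp

lemma proj_norm_sq' (S : Submodule ℂ H) [CompleteSpace S] (x : H) :
    ‖x‖ ^ 2 = ‖x - (Submodule.orthogonalProjectionOnto S x : H)‖ ^ 2 + ‖(Submodule.orthogonalProjectionOnto S x : H)‖ ^ 2 := by
  have h1 : x - (Submodule.orthogonalProjectionOnto S x : H) ∈ Sᗮ := Submodule.sub_starProjection_mem_orthogonal (K := S) x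
  have hab : ⟪x - (Submodule.orthogonalProjectionOnto S x : H), (Submodule.orthogonalProjectionOnto S x : H)⟫ = 0 :=
    (Submodule.mem_orthogonal' S _).mp h1 _ (Submodule.orthogonalProjectionOnto S x).2
  have := orth_norm_sq' hab
  rwa [sub_add_cancel] at this

lemma strict_adjoint_norm_eq_zero' {S T : Submodule ℂ H} [CompleteSpace S] [CompleteSpace T]
    (A : ↥S →L[ℂ] ↥T) (hA : ∀ f : ↥S, f ≠ 0 → ‖A f‖ < ‖f‖) (g : ↥T)
    (hg : ‖(ContinuousLinearMap.adjoint A) g‖ = ‖g‖) : g = 0 := by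
  by_contra hg0
  set h := ContinuousLinearMap.adjoint A g with hh
  have hne : h ≠ 0 := by
    intro h0
    rw [h0, norm_zero] at hg
    exact hg0 (norm_eq_zero.mp hg.symm)
  have hgpos : (0 : ℝ) < ‖g‖ := by
    rw [← hg]
    exact norm_pos_iff.mpr hne
  have e1 : ‖h‖ ^ 2 = RCLike.re (inner (𝕜 := ℂ) g (A h)) := by
    rw [← adjoint_inner_left A h g, ← hh, inner_self_eq_norm_sq]
  have e2 : RCLike.re (inner (𝕜 := ℂ) g (A h)) ≤ ‖g‖ * ‖A h‖ :=
    le_trans (RCLike.re_le_norm _) (norm_inner_le_norm _ _)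
  have e3 : ‖A h‖ < ‖h‖ := hA h hne
  nlinarith [hg, e1, e2, e3, hgpos]

lemma V_core' (U : H →L[ℂ] H) (S T : Submodule ℂ H) [CompleteSpace S] [CompleteSpace T]
    (B : ↥S →L[ℂ] ↥T) (hmap : ∀ x : H, x ∈ Sᗮ → U x ∈ Tᗮ)
    (hiso : ∀ x : H, x ∈ Sᗮ → ‖U x‖ = ‖x‖)
    (hBne : ∀ f : ↥S, ‖B f‖ = ‖f‖ → f = 0)
    (hB_le : ∀ f : ↥S, ‖B f‖ ≤ ‖f‖)
    (V : H →L[ℂ] H)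
    (hV : V = ((1 : H →L[ℂ] H) - T.subtypeL ∘L (Submodule.orthogonalProjectionOnto T : H →L[ℂ] ↥T)) ∘L U ∘L
      ((1 : H →L[ℂ] H) - S.subtypeL ∘L (Submodule.orthogonalProjectionOnto S : H →L[ℂ] ↥S)) +
      T.subtypeL ∘L B ∘L (Submodule.orthogonalProjectionOnto S : H →L[ℂ] ↥S)) :
    (∀ x, ‖V x‖ ≤ ‖x‖) ∧ (∀ x : H, ‖V x‖ = ‖x‖ ↔ x ∈ Sᗮ) ∧ (∀ x ∈ Sᗮ, V x = U x) := by
  have happ : ∀ x : H, V x = U (x - (Submodule.orthogonalProjectionOnto S x : H))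
      + ((B (Submodule.orthogonalProjectionOnto S x)) : H) := by
    intro x
    rw [hV]
    exact V_apply' U S T B hmap x
  have honSperp : ∀ x ∈ Sᗮ, V x = U x := by
    intro x hx
    rw [happ x, Submodule.orthogonalProjectionOnto_apply_of_mem_orthogonal hx]
    simp
  have hnormsq : ∀ x : H, ‖V x‖ ^ 2 = ‖x - (Submodule.orthogonalProjectionOnto S x : H)‖ ^ 2
      + ‖B (Submodule.orthogonalProjectionOnto S x)‖ ^ 2 := by
    intro x
    have h1 : x - (Submodule.orthogonalProjectionOnto S x : H) ∈ Sᗮ := Submodule.sub_starProjection_mem_orthogonal (K := S) x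
    have hab : ⟪U (x - (Submodule.orthogonalProjectionOnto S x : H)), ((B (Submodule.orthogonalProjectionOnto S x)) : H)⟫ = 0 :=
      (Submodule.mem_orthogonal' T _).mp (hmap _ h1) _ (B (Submodule.orthogonalProjectionOnto S x)).2
    rw [happ x, orth_norm_sq' hab, hiso _ h1]
    congr 1
  have hxsq : ∀ x : H, ‖x‖ ^ 2 = ‖x - (Submodule.orthogonalProjectionOnto S x : H)‖ ^ 2
      + ‖(Submodule.orthogonalProjectionOnto S x : H)‖ ^ 2 := fun x => proj_norm_sq' S x
  refine ⟨?_, ?_, honSperp⟩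
  · intro x
    have h2 := hB_le (Submodule.orthogonalProjectionOnto S x)
    have h3 : ‖V x‖ ^ 2 ≤ ‖x‖ ^ 2 := by
      rw [hnormsq x, hxsq x]
      have : ‖(Submodule.orthogonalProjectionOnto S x : H)‖ = ‖Submodule.orthogonalProjectionOnto S x‖ := rfl
      nlinarith [norm_nonneg (B (Submodule.orthogonalProjectionOnto S x)), norm_nonneg (Submodule.orthogonalProjectionOnto S x)]
    have := Real.sqrt_le_sqrt h3
    rwa [Real.sqrt_sq (norm_nonneg _), Real.sqrt_sq (norm_nonneg _)] at this
  · intro x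
    constructor
    · intro hx
      have h2 : ‖B (Submodule.orthogonalProjectionOnto S x)‖ ^ 2 = ‖(Submodule.orthogonalProjectionOnto S x : H)‖ ^ 2 := by
        have := hnormsq x
        rw [hx, hxsq x] at this
        linarith
      have hcoe : ‖(Submodule.orthogonalProjectionOnto S x : H)‖ = ‖Submodule.orthogonalProjectionOnto S x‖ := rfl
      rw [hcoe] at h2
      have h3 : ‖B (Submodule.orthogonalProjectionOnto S x)‖ = ‖Submodule.orthogonalProjectionOnto S x‖ := by
        have := congrArg Real.sqrt h2
        rwa [Real.sqrt_sq (norm_nonneg _), Real.sqrt_sq (norm_nonneg _)] at this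
      have hp0 : Submodule.orthogonalProjectionOnto S x = 0 := hBne _ h3
      have h1 : x - (Submodule.orthogonalProjectionOnto S x : H) ∈ Sᗮ :=
        Submodule.sub_starProjection_mem_orthogonal (K := S) x
      rwa [hp0, Submodule.coe_zero, sub_zero] at h1
    · intro hx
      rw [honSperp x hx]
      exact hiso x hx

end AuxCnu

theorem statement14
    {H : Type*} [NormedAddCommGroup H] [InnerProductSpace ℂ H] [CompleteSpace H]
    [TopologicalSpace.SeparableSpace H]
    (U₀ : H →L[ℂ] H) (hU₀ : ‖U₀‖ ≤ 1) (hcnu : IsCnu U₀)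
    (D Dstar : H →L[ℂ] H)
    (hDpos : D.IsPositive) (hD : D ∘L D = 1 - ContinuousLinearMap.adjoint U₀ ∘L U₀)
    (hDspos : Dstar.IsPositive)
    (hDs : Dstar ∘L Dstar = 1 - U₀ ∘L ContinuousLinearMap.adjoint U₀)
    (Dsp DspStar : Submodule ℂ H)
    (hDsp : Dsp = (LinearMap.range (D : H →ₗ[ℂ] H)).topologicalClosure)
    (hDspStar : DspStar = (LinearMap.range (Dstar : H →ₗ[ℂ] H)).topologicalClosure)
    [FiniteDimensional ℂ ↥Dsp] [FiniteDimensional ℂ ↥DspStar]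
    (n : ℕ) (hn : Module.finrank ℂ ↥Dsp = n) (hns : Module.finrank ℂ ↥DspStar = n)
    (A : ↥Dsp →L[ℂ] ↥DspStar)
    (hAstrict : ∀ f : ↥Dsp, f ≠ 0 → ‖A f‖ < ‖f‖)
    (UA : H →L[ℂ] H)
    (hUA : UA =
      ((1 : H →L[ℂ] H) - DspStar.subtypeL ∘L (Submodule.orthogonalProjectionOnto DspStar : H →L[ℂ] ↥DspStar))
          ∘L U₀ ∘L
          ((1 : H →L[ℂ] H) - Dsp.subtypeL ∘L (Submodule.orthogonalProjectionOnto Dsp : H →L[ℂ] ↥Dsp))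
        + DspStar.subtypeL ∘L A ∘L (Submodule.orthogonalProjectionOnto Dsp : H →L[ℂ] ↥Dsp))
    -- `DA` and `DAstar` are the positive square roots of `I - U_A* U_A` and `I - U_A U_A*`
    (DA : H →L[ℂ] H) (hDApos : DA.IsPositive)
    (hDA : DA ∘L DA = 1 - ContinuousLinearMap.adjoint UA ∘L UA)
    (DAstar : H →L[ℂ] H) (hDAstarpos : DAstar.IsPositive)
    (hDAstar : DAstar ∘L DAstar = 1 - UA ∘L ContinuousLinearMap.adjoint UA) :
    ‖UA‖ ≤ 1 ∧ IsCnu UA ∧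
      (LinearMap.range (DA : H →ₗ[ℂ] H)).topologicalClosure = Dsp ∧
      (LinearMap.range (DAstar : H →ₗ[ℂ] H)).topologicalClosure = DspStar := by
  classical
  have hDsa := hDpos.isSelfAdjoint
  have hDssa := hDspos.isSelfAdjoint
  have hDAsa := hDApos.isSelfAdjoint
  have hDAssa := hDAstarpos.isSelfAdjoint
  -- orthogonal complements of the defect spaces are the kernels of the defect operators
  have hDspO : Dspᗮ = LinearMap.ker (D : H →ₗ[ℂ] H) := by
    rw [hDsp, ← Submodule.orthogonal_orthogonal_eq_closure, orthogonal_range_selfadjoint' D hDsa,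
      Submodule.orthogonal_orthogonal_eq_closure,
      IsClosed.submodule_topologicalClosure_eq (ContinuousLinearMap.isClosed_ker D)]
  have hDspSO : DspStarᗮ = LinearMap.ker (Dstar : H →ₗ[ℂ] H) := by
    rw [hDspStar, ← Submodule.orthogonal_orthogonal_eq_closure,
      orthogonal_range_selfadjoint' Dstar hDssa, Submodule.orthogonal_orthogonal_eq_closure,
      IsClosed.submodule_topologicalClosure_eq (ContinuousLinearMap.isClosed_ker Dstar)]
  -- kernel characterizations
  have hkD : ∀ x : H, D x = 0 ↔ ‖U₀ x‖ = ‖x‖ := defect_eq_zero_iff' U₀ D hDsa hD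
  have hkDs : ∀ x : H, Dstar x = 0 ↔ ‖ContinuousLinearMap.adjoint U₀ x‖ = ‖x‖ :=
    defect_eq_zero_iff' (ContinuousLinearMap.adjoint U₀) Dstar hDssa
      (by rw [adjoint_adjoint]; exact hDs)
  have hkDA : ∀ x : H, DA x = 0 ↔ ‖UA x‖ = ‖x‖ := defect_eq_zero_iff' UA DA hDAsa hDA
  have hkDAs : ∀ x : H, DAstar x = 0 ↔ ‖ContinuousLinearMap.adjoint UA x‖ = ‖x‖ :=
    defect_eq_zero_iff' (ContinuousLinearMap.adjoint UA) DAstar hDAssa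
      (by rw [adjoint_adjoint]; exact hDAstar)
  -- U₀ maps ker D into ker Dstar, and adjoint U₀ maps ker Dstar into ker D
  have hop1 : ∀ y : H, Dstar (Dstar (U₀ y)) = U₀ (D (D y)) := by
    intro y
    have h1 : (Dstar ∘L Dstar) (U₀ y) = U₀ ((D ∘L D) y) := by
      rw [hD, hDs]
      simp [sub_apply, comp_apply, map_sub]
    simpa [comp_apply] using h1
  have hop2 : ∀ y : H, D (D (ContinuousLinearMap.adjoint U₀ y))
      = ContinuousLinearMap.adjoint U₀ (Dstar (Dstar y)) := by
    intro y
    have h1 : (D ∘L D) (ContinuousLinearMap.adjoint U₀ y)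
        = ContinuousLinearMap.adjoint U₀ ((Dstar ∘L Dstar) y) := by
      rw [hD, hDs]
      simp [sub_apply, comp_apply, map_sub]
    simpa [comp_apply] using h1
  have hmap : ∀ x : H, x ∈ Dspᗮ → U₀ x ∈ DspStarᗮ := by
    intro x hx
    rw [hDspO, LinearMap.mem_ker, coe_coe] at hx
    rw [hDspSO, LinearMap.mem_ker]
    exact selfadjoint_sq_apply_eq_zero' hDssa (by rw [hop1 x, hx]; simp)
  have hmap' : ∀ x : H, x ∈ DspStarᗮ → ContinuousLinearMap.adjoint U₀ x ∈ Dspᗮ := by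
    intro x hx
    rw [hDspSO, LinearMap.mem_ker, coe_coe] at hx
    rw [hDspO, LinearMap.mem_ker]
    exact selfadjoint_sq_apply_eq_zero' hDsa (by rw [hop2 x, hx]; simp)
  have hiso : ∀ x : H, x ∈ Dspᗮ → ‖U₀ x‖ = ‖x‖ := by
    intro x hx
    rw [hDspO, LinearMap.mem_ker] at hx
    exact (hkD x).mp hx
  have hiso' : ∀ x : H, x ∈ DspStarᗮ → ‖ContinuousLinearMap.adjoint U₀ x‖ = ‖x‖ := by
    intro x hx
    rw [hDspSO, LinearMap.mem_ker] at hx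
    exact (hkDs x).mp hx
  -- contraction properties of A and its adjoint
  have hBne : ∀ f : ↥Dsp, ‖A f‖ = ‖f‖ → f = 0 := by
    intro f hf
    by_contra h0
    exact absurd hf (ne_of_lt (hAstrict f h0))
  have hB_le : ∀ f : ↥Dsp, ‖A f‖ ≤ ‖f‖ := by
    intro f
    rcases eq_or_ne f 0 with rfl | h0
    · simp
    · exact (hAstrict f h0).le
  have hBne' : ∀ g : ↥DspStar, ‖ContinuousLinearMap.adjoint A g‖ = ‖g‖ → g = 0 :=
    strict_adjoint_norm_eq_zero' A hAstrict
  have hAnorm : ‖A‖ ≤ 1 := opNorm_le_bound A zero_le_one (fun f => by rw [one_mul]; exact hB_le f)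
  have hB_le' : ∀ g : ↥DspStar, ‖ContinuousLinearMap.adjoint A g‖ ≤ ‖g‖ := by
    intro g
    calc ‖ContinuousLinearMap.adjoint A g‖ ≤ ‖ContinuousLinearMap.adjoint A‖ * ‖g‖ :=
          le_opNorm _ g
      _ ≤ 1 * ‖g‖ := by
          apply mul_le_mul_of_nonneg_right _ (norm_nonneg g)
          rw [LinearIsometryEquiv.norm_map (ContinuousLinearMap.adjoint) A]
          exact hAnorm
      _ = ‖g‖ := one_mul _
  -- adjoint formula
  have hUAadj : ContinuousLinearMap.adjoint UA =
      ((1 : H →L[ℂ] H) - Dsp.subtypeL ∘L (Submodule.orthogonalProjectionOnto Dsp : H →L[ℂ] ↥Dsp)) ∘L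
        (ContinuousLinearMap.adjoint U₀) ∘L
        ((1 : H →L[ℂ] H) - DspStar.subtypeL ∘L
          (Submodule.orthogonalProjectionOnto DspStar : H →L[ℂ] ↥DspStar))
      + Dsp.subtypeL ∘L (ContinuousLinearMap.adjoint A) ∘L
          (Submodule.orthogonalProjectionOnto DspStar : H →L[ℂ] ↥DspStar) := by
    have hX : ContinuousLinearMap.adjoint ((1 : H →L[ℂ] H) - DspStar.subtypeL ∘L
        (Submodule.orthogonalProjectionOnto DspStar : H →L[ℂ] ↥DspStar)) = (1 : H →L[ℂ] H) -
        DspStar.subtypeL ∘L (Submodule.orthogonalProjectionOnto DspStar : H →L[ℂ] ↥DspStar) := by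
      rw [map_sub, adjoint_comp, Submodule.adjoint_subtypeL,
        Submodule.adjoint_orthogonalProjectionOnto, one_def, adjoint_id, ← one_def]
    have hY : ContinuousLinearMap.adjoint ((1 : H →L[ℂ] H) - Dsp.subtypeL ∘L
        (Submodule.orthogonalProjectionOnto Dsp : H →L[ℂ] ↥Dsp)) = (1 : H →L[ℂ] H) -
        Dsp.subtypeL ∘L (Submodule.orthogonalProjectionOnto Dsp : H →L[ℂ] ↥Dsp) := by
      rw [map_sub, adjoint_comp, Submodule.adjoint_subtypeL,
        Submodule.adjoint_orthogonalProjectionOnto, one_def, adjoint_id, ← one_def]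
    rw [hUA, map_add, adjoint_comp, adjoint_comp, hX, hY, adjoint_comp, adjoint_comp,
      Submodule.adjoint_subtypeL, Submodule.adjoint_orthogonalProjectionOnto]
    ext x
    simp [comp_apply, add_apply]
  -- the two core results
  obtain ⟨hle, hiff, heq⟩ := V_core' U₀ Dsp DspStar A hmap hiso hBne hB_le UA hUA
  obtain ⟨hle', hiff', heq'⟩ := V_core' (ContinuousLinearMap.adjoint U₀) DspStar Dsp
    (ContinuousLinearMap.adjoint A) hmap' hiso' hBne' hB_le'
    (ContinuousLinearMap.adjoint UA) hUAadj
  -- kernels of the new defect operators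
  have hkerDA : LinearMap.ker (DA : H →ₗ[ℂ] H) = LinearMap.ker (D : H →ₗ[ℂ] H) := by
    ext x
    rw [LinearMap.mem_ker, LinearMap.mem_ker, coe_coe, coe_coe, hkDA x, hiff x, hDspO, LinearMap.mem_ker, coe_coe]
  have hkerDAs : LinearMap.ker (DAstar : H →ₗ[ℂ] H) = LinearMap.ker (Dstar : H →ₗ[ℂ] H) := by
    ext x
    rw [LinearMap.mem_ker, LinearMap.mem_ker, coe_coe, coe_coe, hkDAs x, hiff' x, hDspSO, LinearMap.mem_ker, coe_coe]
  refine ⟨?_, ?_, ?_, ?_⟩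
  · exact opNorm_le_bound UA zero_le_one (fun x => by rw [one_mul]; exact hle x)
  · -- completely non-unitary
    intro K hKcl hKinv hKinvadj hKiso hKsurj
    have hxmem : ∀ x ∈ K, x ∈ Dspᗮ := fun x hx => (hiff x).mp (hKiso x hx)
    have hUAeq : ∀ x ∈ K, UA x = U₀ x := fun x hx => heq x (hxmem x hx)
    have hadjKey : ∀ y ∈ K, ‖ContinuousLinearMap.adjoint UA y‖ = ‖y‖ := by
      intro y hy
      obtain ⟨x, hxK, hxy⟩ := hKsurj y hy
      have hDAx : DA x = 0 := (hkDA x).mpr (hKiso x hxK)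
      have hUAadj_y : ContinuousLinearMap.adjoint UA y = x := by
        rw [← hxy]
        have h1 : (DA ∘L DA) x = ((1 : H →L[ℂ] H) - ContinuousLinearMap.adjoint UA ∘L UA) x := by
          rw [hDA]
        simp only [comp_apply, sub_apply, one_apply, hDAx, map_zero] at h1
        exact (sub_eq_zero.mp h1.symm).symm
      rw [hUAadj_y, ← hxy, hKiso x hxK]
    have hadjEq : ∀ y ∈ K, ContinuousLinearMap.adjoint UA y
        = ContinuousLinearMap.adjoint U₀ y := by
      intro y hy
      exact heq' y ((hiff' y).mp (hadjKey y hy))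
    apply hcnu K hKcl
    · intro x hx
      rw [← hUAeq x hx]
      exact hKinv x hx
    · intro x hx
      rw [← hadjEq x hx]
      exact hKinvadj x hx
    · intro x hx
      rw [← hUAeq x hx]
      exact hKiso x hx
    · intro y hy
      obtain ⟨x, hxK, hxy⟩ := hKsurj y hy
      exact ⟨x, hxK, by rw [← hUAeq x hxK]; exact hxy⟩
  · have hcl : IsClosed ((Dsp : Submodule ℂ H) : Set H) := by
      rw [hDsp]
      exact Submodule.isClosed_topologicalClosure _
    rw [closure_range_selfadjoint' DA hDAsa, hkerDA, ← hDspO,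
      Submodule.orthogonal_orthogonal_eq_closure,
      IsClosed.submodule_topologicalClosure_eq hcl]
  · have hcl : IsClosed ((DspStar : Submodule ℂ H) : Set H) := by
      rw [hDspStar]
      exact Submodule.isClosed_topologicalClosure _
    rw [closure_range_selfadjoint' DAstar hDAssa, hkerDAs, ← hDspSO,
      Submodule.orthogonal_orthogonal_eq_closure,
      IsClosed.submodule_topologicalClosure_eq hcl]


end
end
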